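/- Let K be a field, s ≥ 1, and p₁, …, p_s distinct points of ℙⁿ(K). Suppose p₁, …, p_{s−1} lie in a hyperplane H and p_s ∉ H. If the points p₁, …, p_{s−1} impose independent conditions on degree-d forms on H (d ≥ 1), then p₁, …, p_s impose independent conditions on degree-d forms on ℙⁿ. (Hint: take cones with vertex p_s over divisors in H, and a degree-d hypersurface through p₁,…,p_{s−1} missing p_s obtained as a cone over a suitable divisor.) -/

import Mathlib

open MvPolynomial

/-- Points `q 0, …, q (s-1)` lie in the hyperplane `H = {x_n = 0}` of `ℙⁿ` and
`v ∉ H`.  If the points `q i` impose independent conditions on degree-`d` forms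
on `H ≅ ℙ^{n-1}` (coordinates `x₀, …, x_{n-1}`), then all the points together
impose independent conditions on degree-`d` forms on `ℙⁿ`. -/
theorem independent_conditions_cone_argument
    {K : Type*} [Field K] (n s d : ℕ) (hs : 1 ≤ s) (hd : 1 ≤ d)
    (q : Fin s → (Fin (n + 1) → K)) (v : Fin (n + 1) → K)
    (hq0 : ∀ i, q i ≠ 0) (hv0 : v ≠ 0)
    (hqH : ∀ i, q i (Fin.last n) = 0)
    (hvH : v (Fin.last n) ≠ 0)
    (hdist : ∀ i j : Fin s, i ≠ j → ¬ ∃ c : K, q j = c • q i)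
    (hind : Function.Surjective
      (fun g : {g : MvPolynomial (Fin n) K // g.IsHomogeneous d} =>
        fun i : Fin s => eval ((q i) ∘ Fin.castSucc) g.1)) :
    Function.Surjective
      (fun F : {F : MvPolynomial (Fin (n + 1)) K // F.IsHomogeneous d} =>
        ((fun i : Fin s => eval (q i) F.1), eval v F.1)) := by
  rintro ⟨a, b⟩
  obtain ⟨⟨g, hg⟩, hga⟩ := hind a
  -- cone over g with vertex v
  set F₀ : MvPolynomial (Fin (n + 1)) K := rename Fin.castSucc g with hF₀
  set t : K := (b - eval v F₀) / (v (Fin.last n)) ^ d with ht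
  set F : MvPolynomial (Fin (n + 1)) K := F₀ + C t * (X (Fin.last n)) ^ d with hF
  have hFhom : F.IsHomogeneous d := by
    exact (hg.rename_isHomogeneous).add (isHomogeneous_C_mul_X_pow t (Fin.last n) d)
  refine ⟨⟨F, hFhom⟩, ?_⟩
  have hXq : ∀ i, eval (q i) F = eval ((q i) ∘ Fin.castSucc) g := by
    intro i
    simp [hF, hF₀, eval_rename, hqH i, zero_pow (by omega : d ≠ 0)]
  have hvd : (v (Fin.last n)) ^ d ≠ 0 := pow_ne_zero _ hvH
  have hXv : eval v F = b := by
    simp only [hF, map_add, map_mul, map_pow, eval_C, eval_X, ht]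
    field_simp
    ring
  refine Prod.ext ?_ hXv
  funext i
  exact (hXq i).trans (congrFun hga i)
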